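/- Let A be a real n×n symmetric positive definite matrix whose eigenvalue ratio satisfies λ_min(A)/λ_max(A) ≥ ϱ for some ϱ ∈ (0,1], and let S be a symmetric n×n matrix. Set W = A S and let W̊ = W − (tr W / n) Id be the traceless part of W. Then (tr W)² relates to |W|² by tr[W²] ≥ |W|² − c |W̊|², where c = (1−ϱ)²/(1+ϱ²) ∈ [0,1). -/

import Mathlib

lemma frob15 (n : ℕ) (X : Matrix (Fin n) (Fin n) ℝ) :
    ∑ i, ∑ j, (X i j)^2 = (X * star X).trace := by
  simp [Matrix.trace, Matrix.mul_apply, Matrix.star_apply, Matrix.diag, pow_two]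

lemma traceless15 (n : ℕ) (hn : 0 < n) (X : Matrix (Fin n) (Fin n) ℝ) :
    ∑ i, ∑ j, ((X - (X.trace / (n:ℝ)) • (1 : Matrix (Fin n) (Fin n) ℝ)) i j)^2
      = (∑ i, ∑ j, (X i j)^2) - X.trace^2 / n := by
  have hn' : (0:ℝ) < n := by exact_mod_cast hn
  set t : ℝ := X.trace with ht
  have he : ∀ i j, ((X - (t/n) • (1 : Matrix (Fin n) (Fin n) ℝ)) i j)^2
      = (X i j)^2 - (if i = j then (2*(t/n)*X i j - (t/n)^2) else 0) := by
    intro i j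
    by_cases h : i = j <;>
      simp [Matrix.sub_apply, Matrix.smul_apply, Matrix.one_apply, h] <;> ring
  simp only [he, Finset.sum_sub_distrib, Finset.sum_ite_eq, Finset.mem_univ, if_true]
  have htr : t = ∑ i, X i i := by simp [ht, Matrix.trace, Matrix.diag]
  rw [← Finset.mul_sum, ← htr, Finset.sum_const, Finset.card_univ, Fintype.card_fin,
    nsmul_eq_mul]
  field_simp
  ring

lemma pointwise15 (ϱ a b : ℝ) (h1 : ϱ * b ≤ a) (h2 : ϱ * a ≤ b) :
    (a - b)^2 * (1 + ϱ^2) ≤ (1 - ϱ)^2 * (a^2 + b^2) := by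
  nlinarith [mul_nonneg (sub_nonneg.2 h1) (sub_nonneg.2 h2)]

lemma double_sum_sym15 (n : ℕ) (f : Fin n → Fin n → ℝ) :
    ∑ i, ∑ j, (f i j + f j i) = 2 * ∑ i, ∑ j, f i j := by
  simp only [Finset.sum_add_distrib]
  rw [two_mul]
  congr 1
  exact Finset.sum_comm

lemma scalar_key15 (n : ℕ) (hn : 0 < n) (lam : Fin n → ℝ) (M : Matrix (Fin n) (Fin n) ℝ)
    (hM : ∀ i j, M j i = M i j) (ϱ : ℝ) (hϱ0 : 0 < ϱ)
    (hratio : ∀ i j, ϱ * lam j ≤ lam i) :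
    (∑ i, ∑ j, (lam i * M i j) * (lam j * M j i)) ≥
      (∑ i, ∑ j, (lam i * M i j)^2) -
        ((1 - ϱ)^2 / (1 + ϱ^2)) *
          ((∑ i, ∑ j, (lam i * M i j)^2) - (∑ i, lam i * M i i)^2 / n) := by
  have hden : (0:ℝ) < 1 + ϱ^2 := by positivity
  set c : ℝ := (1 - ϱ)^2 / (1 + ϱ^2) with hc
  have hc0 : 0 ≤ c := by positivity
  set q : Fin n → Fin n → ℝ :=
    fun i j => (lam i * M i j)^2 - (if i = j then (lam i * M i j)^2 else 0) with hqdef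
  have hQ : ∑ i, ∑ j, q i j
      = (∑ i, ∑ j, (lam i * M i j)^2) - ∑ i, (lam i * M i i)^2 := by
    simp [hqdef, Finset.sum_sub_distrib]
  have hCS : (∑ i, lam i * M i i)^2 / n ≤ ∑ i, (lam i * M i i)^2 := by
    have h := sq_sum_le_card_mul_sum_sq (s := (Finset.univ : Finset (Fin n)))
      (f := fun i => lam i * M i i)
    rw [Finset.card_univ, Fintype.card_fin] at h
    rw [div_le_iff₀ (by exact_mod_cast hn)]
    calc (∑ i, lam i * M i i)^2 ≤ (n : ℝ) * ∑ i, (lam i * M i i)^2 := by exact_mod_cast h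
      _ = (∑ i, (lam i * M i i)^2) * n := by ring
  have hterm : ∀ i j,
      (((lam i * M i j)^2 - (lam i * M i j) * (lam j * M j i)) +
        ((lam j * M j i)^2 - (lam j * M j i) * (lam i * M i j)))
        ≤ c * q i j + c * q j i := by
    intro i j
    rcases eq_or_ne i j with h | h
    · subst h
      simp [hqdef, pow_two]
    · have hji : M j i = M i j := hM i j
      have hp := pointwise15 ϱ (lam i) (lam j) (hratio i j) (hratio j i)
      have hp2 := mul_le_mul_of_nonneg_right hp (sq_nonneg (M i j))
      have hc' : c * ((lam i ^2 + lam j ^2) * (M i j)^2)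
          = (1 - ϱ)^2 * (lam i ^2 + lam j ^2) * (M i j)^2 / (1 + ϱ^2) := by
        rw [hc]; ring
      simp only [hqdef, if_neg h, if_neg (Ne.symm h), sub_zero, hji]
      have hkey : (lam i - lam j)^2 * (M i j)^2 ≤ c * ((lam i ^2 + lam j ^2) * (M i j)^2) := by
        rw [hc', le_div_iff₀ hden]
        linarith [hp2]
      nlinarith [hkey]
  have hsum := Finset.sum_le_sum (fun i (_ : i ∈ Finset.univ) =>
    Finset.sum_le_sum (fun j (_ : j ∈ Finset.univ) => hterm i j))
  rw [double_sum_sym15 n (fun i j => (lam i * M i j)^2 - (lam i * M i j) * (lam j * M j i)),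
    double_sum_sym15 n (fun i j => c * q i j)] at hsum
  have hFG : ∑ i, ∑ j, ((lam i * M i j)^2 - (lam i * M i j) * (lam j * M j i))
      = (∑ i, ∑ j, (lam i * M i j)^2) - ∑ i, ∑ j, (lam i * M i j) * (lam j * M j i) := by
    simp [Finset.sum_sub_distrib]
  have hcQ : ∑ i, ∑ j, c * q i j = c * ∑ i, ∑ j, q i j := by
    simp [Finset.mul_sum]
  rw [hFG, hcQ, hQ] at hsum
  have hmono : c * ((∑ i, ∑ j, (lam i * M i j)^2) - ∑ i, (lam i * M i i)^2)
      ≤ c * ((∑ i, ∑ j, (lam i * M i j)^2) - (∑ i, lam i * M i i)^2 / n) := by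
    apply mul_le_mul_of_nonneg_left _ hc0
    linarith
  linarith

theorem stmt15 (n : ℕ) (hn : 0 < n) (A S : Matrix (Fin n) (Fin n) ℝ)
    (hA : A.PosDef) (hS : S.IsSymm) (ϱ : ℝ) (hϱ0 : 0 < ϱ) (hϱ1 : ϱ ≤ 1)
    (hratio : ∀ i j, ϱ * hA.1.eigenvalues j ≤ hA.1.eigenvalues i) :
    ((A * S) * (A * S)).trace ≥
      (∑ i, ∑ j, ((A * S) i j) ^ 2) -
        ((1 - ϱ) ^ 2 / (1 + ϱ ^ 2)) *
          (∑ i, ∑ j,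
            (((A * S) - (((A * S).trace) / (n : ℝ)) • (1 : Matrix (Fin n) (Fin n) ℝ)) i j) ^ 2) := by
  have hH : A.IsHermitian := hA.1
  set lam := hA.1.eigenvalues with hlamdef
  set U : Matrix (Fin n) (Fin n) ℝ := (hH.eigenvectorUnitary : Matrix (Fin n) (Fin n) ℝ)
    with hUdef
  have hU1 : star U * U = 1 := Matrix.mem_unitaryGroup_iff'.mp hH.eigenvectorUnitary.2
  have hU2 : U * star U = 1 := Matrix.mem_unitaryGroup_iff.mp hH.eigenvectorUnitary.2
  have hcancel : ∀ Y : Matrix (Fin n) (Fin n) ℝ, star U * (U * Y) = Y := by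
    intro Y; rw [← Matrix.mul_assoc, hU1, Matrix.one_mul]
  have hspec : A = U * Matrix.diagonal lam * star U := by
    have h := hH.spectral_theorem
    simpa [RCLike.ofReal_real_eq_id, Function.id_comp] using h
  set M : Matrix (Fin n) (Fin n) ℝ := star U * S * U with hMdef
  have hSstar : star S = S := by
    rw [Matrix.star_eq_conjTranspose, Matrix.conjTranspose_eq_transpose_of_trivial]
    exact hS
  have hstarM : star M = M := by
    rw [hMdef, star_mul, star_mul, star_star, hSstar, Matrix.mul_assoc]
  have hMsymm : ∀ i j, M j i = M i j := by
    intro i j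
    have h : (star M) i j = M i j := by rw [hstarM]
    simpa [Matrix.star_apply] using h
  set B : Matrix (Fin n) (Fin n) ℝ := Matrix.diagonal lam * M with hBdef
  have hW : A * S = U * B * star U := by
    rw [hspec, hBdef, hMdef]
    simp only [Matrix.mul_assoc]
    rw [hU2, Matrix.mul_one]
  have hBij : ∀ i j, B i j = lam i * M i j := by
    intro i j; rw [hBdef]; simp [Matrix.diagonal_mul]
  have hconj : ∀ X : Matrix (Fin n) (Fin n) ℝ, (U * X * star U).trace = X.trace := by
    intro X
    rw [Matrix.trace_mul_comm, ← Matrix.mul_assoc, hU1, Matrix.one_mul]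
  have h1 : ((A * S) * (A * S)).trace = (B * B).trace := by
    rw [hW]
    have e : (U * B * star U) * (U * B * star U) = U * (B * B) * star U := by
      simp only [Matrix.mul_assoc, hcancel]
    rw [e, hconj]
  have h2 : (∑ i, ∑ j, ((A * S) i j) ^ 2) = (B * star B).trace := by
    rw [frob15, hW]
    have e : (U * B * star U) * star (U * B * star U) = U * (B * star B) * star U := by
      simp only [star_mul, star_star, Matrix.mul_assoc, hcancel]
    rw [e, hconj]
  have h3 : (A * S).trace = B.trace := by rw [hW, hconj]
  have h4 := traceless15 n hn (A * S)
  have hBB : (B * B).trace = ∑ i, ∑ j, (lam i * M i j) * (lam j * M j i) := by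
    simp [Matrix.trace, Matrix.diag, Matrix.mul_apply, hBij]
  have hBsB : (B * star B).trace = ∑ i, ∑ j, (lam i * M i j) ^ 2 := by
    simp [Matrix.trace, Matrix.diag, Matrix.mul_apply, Matrix.star_apply, hBij, pow_two]
  have hBtr : B.trace = ∑ i, lam i * M i i := by
    simp [Matrix.trace, Matrix.diag, hBij]
  rw [h1, h4, h3, hBtr, h2, hBsB, hBB]
  exact scalar_key15 n hn lam M hMsymm ϱ hϱ0 hratio
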